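/- Let (Ω, F, P) be a probability space with random variables Y, W (W taking values in a measurable space), and set g₀(w) = E[Y | W = w]. Let m : Ω × L² → ℝ be such that g ↦ E[m(·; g)] is linear with Riesz representer α₀ ∈ L², i.e. E[m(Z; g)] = E[α₀(W) g(W)] for all square-integrable g. Define ψ(Z; α, g) = m(Z; g) + α(W)(Y − g(W)). Then for any fixed square-integrable functions ĝ, α̂: E[ψ(Z; α̂, ĝ)] − E[m(Z; g₀)] = −E[(α̂(W) − α₀(W))(ĝ(W) − g₀(W))]. -/

import Mathlib

open MeasureTheory

lemma integrable_mul_of_memL2 {Ω : Type*} {m0 : MeasurableSpace Ω} {μ : Measure Ω}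
    {f g : Ω → ℝ} (hf : MemLp f 2 μ) (hg : MemLp g 2 μ) :
    Integrable (fun ω => f ω * g ω) μ := by
  have h : MemLp (f • g) 1 μ := MemLp.smul hg hf
  exact memLp_one_iff_integrable.mp h

lemma memL2_condexp {Ω : Type*} {m0 : MeasurableSpace Ω} {μ : Measure Ω}
    [IsProbabilityMeasure μ] (𝔪 : MeasurableSpace Ω) (h𝔪 : 𝔪 ≤ m0)
    {Y : Ω → ℝ} (hY : MemLp Y 2 μ) : MemLp (μ[Y | 𝔪]) 2 μ := by
  letI : MeasurableSpace Ω := m0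
  have hfm : AEStronglyMeasurable[𝔪] ((condExpL2 ℝ ℝ h𝔪 (hY.toLp Y)).1 : Ω → ℝ) μ :=
    aestronglyMeasurable_condExpL2 h𝔪 _
  have hint : Integrable ((condExpL2 ℝ ℝ h𝔪 (hY.toLp Y)).1 : Ω → ℝ) μ :=
    (Lp.memLp ((condExpL2 ℝ ℝ h𝔪 (hY.toLp Y)).1)).integrable one_le_two
  have heq : ((condExpL2 ℝ ℝ h𝔪 (hY.toLp Y)).1 : Ω → ℝ) =ᵐ[μ] μ[Y | 𝔪] := by
    refine ae_eq_condExp_of_forall_setIntegral_eq h𝔪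
      (hY.integrable one_le_two)
      (fun s _ _ => hint.integrableOn)
      (fun s hs hμs => ?_) hfm
    have h1 : ∫ x in s, ((condExpL2 ℝ ℝ h𝔪 (hY.toLp Y)).1 : Ω → ℝ) x ∂μ
        = ∫ x in s, (hY.toLp Y : Ω → ℝ) x ∂μ :=
      integral_condExpL2_eq h𝔪 (hY.toLp Y) hs hμs.ne
    rw [h1]
    exact integral_congr_ae (ae_restrict_of_ae hY.coeFn_toLp)
  exact (Lp.memLp ((condExpL2 ℝ ℝ h𝔪 (hY.toLp Y)).1)).ae_eq heq

/-- Double robustness identity. With `g₀ = E[Y | W]` (conditional expectation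
with respect to the σ-algebra `𝔪` generated by `W`), a linear moment functional
`M g = E[m(Z;g)]` with Riesz representer `α₀` (i.e. `M g = E[α₀ g]` for square-integrable
`𝔪`-measurable `g`), and `ψ(Z;α,g) = m(Z;g) + α(W)(Y − g(W))`, for any fixed
square-integrable functions `ghat, αhat` of `W`:
`E[ψ(Z; αhat, ghat)] − E[m(Z; g₀)] = −E[(αhat − α₀)(ghat − g₀)]`. -/
theorem double_robustness_identity
    {Ω : Type*} {m0 : MeasurableSpace Ω} {μ : Measure Ω} [IsProbabilityMeasure μ]
    (𝔪 : MeasurableSpace Ω) (h𝔪 : 𝔪 ≤ m0)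
    (Y : Ω → ℝ) (hY : MemLp Y 2 μ)
    (M : (Ω → ℝ) → ℝ) (α₀ ghat αhat : Ω → ℝ)
    (hα₀ : MemLp α₀ 2 μ) (hghat : MemLp ghat 2 μ) (hαhat : MemLp αhat 2 μ)
    (hα₀m : StronglyMeasurable[𝔪] α₀)
    (hghatm : StronglyMeasurable[𝔪] ghat)
    (hαhatm : StronglyMeasurable[𝔪] αhat)
    (hRiesz : ∀ g : Ω → ℝ, MemLp g 2 μ → StronglyMeasurable[𝔪] g →
      M g = ∫ ω, α₀ ω * g ω ∂μ) :
    (M ghat + ∫ ω, αhat ω * (Y ω - ghat ω) ∂μ) - M (μ[Y | 𝔪]) =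
      - ∫ ω, (αhat ω - α₀ ω) * (ghat ω - (μ[Y | 𝔪]) ω) ∂μ := by
  letI : MeasurableSpace Ω := m0
  set g₀ : Ω → ℝ := μ[Y | 𝔪] with hg₀def
  have hg₀ : MemLp g₀ 2 μ := memL2_condexp 𝔪 h𝔪 hY
  have hg₀m : StronglyMeasurable[𝔪] g₀ := stronglyMeasurable_condExp
  have iA : Integrable (fun ω => α₀ ω * ghat ω) μ := integrable_mul_of_memL2 hα₀ hghat
  have iB : Integrable (fun ω => αhat ω * g₀ ω) μ := integrable_mul_of_memL2 hαhat hg₀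
  have iC : Integrable (fun ω => αhat ω * ghat ω) μ := integrable_mul_of_memL2 hαhat hghat
  have iD : Integrable (fun ω => α₀ ω * g₀ ω) μ := integrable_mul_of_memL2 hα₀ hg₀
  have iE : Integrable (fun ω => αhat ω * Y ω) μ := integrable_mul_of_memL2 hαhat hY
  have iY : Integrable Y μ := hY.integrable one_le_two
  -- key identity: E[αhat Y] = E[αhat g₀]
  have key : ∫ ω, αhat ω * Y ω ∂μ = ∫ ω, αhat ω * g₀ ω ∂μ := by
    have h1 : μ[fun ω => αhat ω * Y ω | 𝔪] =ᵐ[μ] fun ω => αhat ω * g₀ ω := by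
      have := condExp_mul_of_stronglyMeasurable_left (μ := μ) hαhatm (f := αhat) (g := Y) iE iY
      filter_upwards [this] with ω hω using hω
    calc ∫ ω, αhat ω * Y ω ∂μ
        = ∫ ω, (μ[fun ω => αhat ω * Y ω | 𝔪]) ω ∂μ := (integral_condExp h𝔪).symm
      _ = ∫ ω, αhat ω * g₀ ω ∂μ := integral_congr_ae h1
  rw [hRiesz ghat hghat hghatm, hRiesz g₀ hg₀ hg₀m]
  have lhs2 : ∫ ω, αhat ω * (Y ω - ghat ω) ∂μ
      = (∫ ω, αhat ω * Y ω ∂μ) - ∫ ω, αhat ω * ghat ω ∂μ := by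
    have h : (fun ω => αhat ω * (Y ω - ghat ω))
        = fun ω => αhat ω * Y ω - αhat ω * ghat ω := by funext ω; ring
    rw [h, integral_sub iE iC]
  have rhs2 : ∫ ω, (αhat ω - α₀ ω) * (ghat ω - g₀ ω) ∂μ
      = ((∫ ω, αhat ω * ghat ω ∂μ) - ∫ ω, αhat ω * g₀ ω ∂μ)
        - ((∫ ω, α₀ ω * ghat ω ∂μ) - ∫ ω, α₀ ω * g₀ ω ∂μ) := by
    have h : (fun ω => (αhat ω - α₀ ω) * (ghat ω - g₀ ω))
        = fun ω => (αhat ω * ghat ω - αhat ω * g₀ ω) - (α₀ ω * ghat ω - α₀ ω * g₀ ω) := by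
      funext ω; ring
    have i1 : Integrable (fun ω => αhat ω * ghat ω - αhat ω * g₀ ω) μ := iC.sub iB
    have i2 : Integrable (fun ω => α₀ ω * ghat ω - α₀ ω * g₀ ω) μ := iA.sub iD
    rw [h, integral_sub i1 i2, integral_sub iC iB, integral_sub iA iD]
  rw [lhs2, rhs2, key]
  ring
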